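/- Let L be a bounded implicative meet semi-lattice and let a, b ∈ L. For every optimal filter x of L: a → b ∈ x if and only if for every optimal filter y of L with x ⊆ y, a ∈ y implies b ∈ y. (Equivalently, φ(a → b) = φ(a) → φ(b), where φ(a) → φ(b) = {x optimal : ↑x ∩ φ(a) ⊆ φ(b)}.) -/

import Mathlib

/-- A filter of a meet semi-lattice: a nonempty upper set closed under meets. -/
def IsSLFilter {L : Type*} [SemilatticeInf L] (F : Set L) : Prop :=
  F.Nonempty ∧ (∀ a b : L, a ∈ F → a ≤ b → b ∈ F) ∧
    (∀ a b : L, a ∈ F → b ∈ F → a ⊓ b ∈ F)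

/-- A prime (meet-prime) filter of a meet semi-lattice. -/
def IsSLPrimeFilter {L : Type*} [SemilatticeInf L] (F : Set L) : Prop :=
  IsSLFilter F ∧ F ≠ Set.univ ∧
    ∀ F₁ F₂ : Set L, IsSLFilter F₁ → IsSLFilter F₂ → F₁ ∩ F₂ ⊆ F → F₁ ⊆ F ∨ F₂ ⊆ F

/-- An ideal of a meet semi-lattice: a nonempty lower set in which any two
elements have a common upper bound lying in the ideal. -/
def IsSLIdeal {L : Type*} [SemilatticeInf L] (I : Set L) : Prop :=
  I.Nonempty ∧ (∀ a b : L, a ∈ I → b ≤ a → b ∈ I) ∧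
    (∀ a b : L, a ∈ I → b ∈ I → ∃ c ∈ I, a ≤ c ∧ b ≤ c)

/-- A meet semi-lattice is distributive. -/
def IsDistribSL (L : Type*) [SemilatticeInf L] : Prop :=
  ∀ a b₁ b₂ : L, b₁ ⊓ b₂ ≤ a → ∃ c₁ c₂ : L, b₁ ≤ c₁ ∧ b₂ ≤ c₂ ∧ a = c₁ ⊓ c₂

/-- A Frink ideal of a meet semi-lattice. -/
def IsFrinkIdeal {L : Type*} [SemilatticeInf L] (I : Set L) : Prop :=
  I.Nonempty ∧ ∀ A : Finset L, A.Nonempty → ↑A ⊆ I →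
    ∀ c : L, (⋂ a ∈ A, Set.Ici a) ⊆ Set.Ici c → c ∈ I

/-- An optimal filter: a filter whose complement is a Frink ideal. -/
def IsOptimalFilter {L : Type*} [SemilatticeInf L] (F : Set L) : Prop :=
  IsSLFilter F ∧ IsFrinkIdeal Fᶜ

/-- σ(a): the set of prime filters containing `a`. -/
def sigmaSet {L : Type*} [SemilatticeInf L] (a : L) : Set (Set L) :=
  {P | IsSLPrimeFilter P ∧ a ∈ P}

/-- φ(a): the set of optimal filters containing `a`. -/
def phiSet {L : Type*} [SemilatticeInf L] (a : L) : Set (Set L) :=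
  {F | IsOptimalFilter F ∧ a ∈ F}

/-- Filters are closed under finite meets. -/
lemma IsSLFilter.inf'_mem {L ι : Type*} [SemilatticeInf L] {G : Set L} (hG : IsSLFilter G)
    (A : Finset ι) (hA : A.Nonempty) (f : ι → L) (hf : ∀ a ∈ A, f a ∈ G) :
    A.inf' hA f ∈ G := by
  induction hA using Finset.Nonempty.cons_induction with
  | singleton a => simpa using hf a (by simp)
  | cons a A ha hA ih =>
      rw [Finset.inf'_cons hA]
      exact hG.2.2 _ _ (hf a (by simp)) (ih (fun b hb => hf b (by simp [hb])))

/-- In a bounded implicative meet semi-lattice, a → b belongs to an optimal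
filter x iff every optimal filter above x containing a contains b. -/
theorem himp_mem_optimal_iff {L : Type*} [SemilatticeInf L] [OrderTop L] [OrderBot L]
    (himp : L → L → L) (adj : ∀ a b c : L, a ⊓ c ≤ b ↔ c ≤ himp a b)
    (a b : L) (x : Set L) (hx : IsOptimalFilter x) :
    himp a b ∈ x ↔
      ∀ y : Set L, IsOptimalFilter y → x ⊆ y → a ∈ y → b ∈ y := by
  constructor
  · intro h y hy hxy hay
    have h1 : a ⊓ himp a b ≤ b := (adj a b (himp a b)).2 le_rfl
    exact hy.1.2.1 _ _ (hy.1.2.2 _ _ hay (hxy h)) h1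
  · intro H
    by_contra hab
    -- the filter generated by x ∪ {a}
    set F : Set L := {c | ∃ d ∈ x, d ⊓ a ≤ c} with hF
    obtain ⟨⟨d₀, hd₀⟩, hup, hinf⟩ := hx.1
    have hFfil : IsSLFilter F := by
      refine ⟨⟨a, d₀, hd₀, inf_le_right⟩, ?_, ?_⟩
      · rintro c e ⟨d, hd, hdc⟩ hce; exact ⟨d, hd, hdc.trans hce⟩
      · rintro c e ⟨d₁, hd₁, h₁⟩ ⟨d₂, hd₂, h₂⟩
        refine ⟨d₁ ⊓ d₂, hinf _ _ hd₁ hd₂, le_inf ?_ ?_⟩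
        · exact le_trans (inf_le_inf_right a (inf_le_left)) h₁
        · exact le_trans (inf_le_inf_right a (inf_le_right)) h₂
    have hxF : x ⊆ F := fun c hc => ⟨c, hc, inf_le_left⟩
    have haF : a ∈ F := ⟨d₀, hd₀, inf_le_right⟩
    have hbF : b ∉ F := by
      rintro ⟨d, hd, hdb⟩
      exact hab (hup _ _ hd ((adj a b d).1 (by rwa [inf_comm])))
    -- Zorn: maximal filter containing F and avoiding b
    set S : Set (Set L) := {G | IsSLFilter G ∧ F ⊆ G ∧ b ∉ G} with hS
    have hFS : F ∈ S := ⟨hFfil, le_rfl, hbF⟩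
    obtain ⟨G, hFG, hGS, hGmax⟩ : ∃ G, F ⊆ G ∧ G ∈ S ∧ ∀ G' ∈ S, G ⊆ G' → G' ⊆ G := by
      have hchains : ∀ c ⊆ S, IsChain (· ⊆ ·) c → c.Nonempty →
          ∃ ub ∈ S, ∀ s ∈ c, s ⊆ ub := by
        intro c hcS hchain hcne
        refine ⟨⋃₀ c, ⟨⟨?_, ?_, ?_⟩, ?_, ?_⟩, fun s hs => Set.subset_sUnion_of_mem hs⟩
        · obtain ⟨s, hs⟩ := hcne
          obtain ⟨e, he⟩ := (hcS hs).1.1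
          exact ⟨e, s, hs, he⟩
        · rintro p q ⟨s, hs, hp⟩ hpq
          exact ⟨s, hs, (hcS hs).1.2.1 _ _ hp hpq⟩
        · rintro p q ⟨s, hs, hp⟩ ⟨t, ht, hq⟩
          rcases hchain.total hs ht with h | h
          · exact ⟨t, ht, (hcS ht).1.2.2 _ _ (h hp) hq⟩
          · exact ⟨s, hs, (hcS hs).1.2.2 _ _ hp (h hq)⟩
        · obtain ⟨s, hs⟩ := hcne
          exact (hcS hs).2.1.trans (Set.subset_sUnion_of_mem hs)
        · rintro ⟨s, hs, hbs⟩
          exact (hcS hs).2.2 hbs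
      obtain ⟨G, hFG, hmax⟩ := zorn_subset_nonempty S hchains F hFS
      exact ⟨G, hFG, hmax.1, fun G' hG' hGG' => hmax.2 hG' hGG'⟩
    obtain ⟨hGfil, hFG', hbG⟩ := hGS
    -- G is optimal
    have hGopt : IsOptimalFilter G := by
      refine ⟨hGfil, ⟨b, hbG⟩, ?_⟩
      intro A hA hAG c hc
      intro hcG
      -- for each e ∈ A, there is g ∈ G with g ⊓ e ≤ b
      have key : ∀ e ∈ A, ∃ g ∈ G, g ⊓ e ≤ b := by
        intro e he
        have heG : e ∉ G := hAG (by exact_mod_cast he)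
        set G' : Set L := {p | ∃ g ∈ G, g ⊓ e ≤ p} with hG'
        have hG'fil : IsSLFilter G' := by
          refine ⟨⟨e, ?_⟩, ?_, ?_⟩
          · obtain ⟨g, hg⟩ := hGfil.1; exact ⟨g, hg, inf_le_right⟩
          · rintro p q ⟨g, hg, hgp⟩ hpq; exact ⟨g, hg, hgp.trans hpq⟩
          · rintro p q ⟨g₁, hg₁, h₁⟩ ⟨g₂, hg₂, h₂⟩
            refine ⟨g₁ ⊓ g₂, hGfil.2.2 _ _ hg₁ hg₂, le_inf ?_ ?_⟩
            · exact le_trans (inf_le_inf_right e inf_le_left) h₁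
            · exact le_trans (inf_le_inf_right e inf_le_right) h₂
        have hGG' : G ⊆ G' := fun g hg => ⟨g, hg, inf_le_left⟩
        have : b ∈ G' := by
          by_contra hbG'
          have : G' ⊆ G := hGmax G' ⟨hG'fil, hFG'.trans hGG', hbG'⟩ hGG'
          obtain ⟨g, hg⟩ := hGfil.1
          exact heG (this ⟨g, hg, inf_le_right⟩)
        exact this
      choose g hgG hgb using key
      -- h := c ⊓ inf of the g's
      set h : L := c ⊓ A.attach.inf' (by simpa using hA) (fun e => g e.1 e.2) with hh
      have hhG : h ∈ G := by
        refine hGfil.2.2 _ _ hcG ?_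
        exact hGfil.inf'_mem _ _ _ (fun e _ => hgG e.1 e.2)
      -- h → b is an upper bound of A
      have hub : himp h b ∈ ⋂ e ∈ A, Set.Ici e := by
        simp only [Set.mem_iInter, Set.mem_Ici]
        intro e he
        refine (adj h b e).1 ?_
        have : h ≤ g e he := le_trans inf_le_right (Finset.inf'_le _ (Finset.mem_attach _ ⟨e, he⟩))
        exact le_trans (inf_le_inf_right e this) (hgb e he)
      have hcle : c ≤ himp h b := hc hub
      have : h ≤ b := by
        have := (adj h b c).2 hcle
        exact le_trans (le_inf le_rfl inf_le_left) this
      exact hbG (hGfil.2.1 _ _ hhG this)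
    exact hbG (H G hGopt (hxF.trans hFG') (hFG' haF))
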